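/- For every subset T ⊆ {1,…,m}, every permutation τ of {1,…,n}, and every (x, y, z) in H_C, the inequality (√(σ + ∑_{i∈T} d_i y_i²) + ∑_{k=1}^n π^{σ+d(T)}_{τ,k} · x_{τ(k)})² + ∑_{i∈{1,…,m}∖T} d_i y_i² ≤ z² holds, where d(T) = ∑_{i∈T} d_i. -/

import Mathlib

/-- Antitonicity of t ↦ √(t+e) − √t. -/
lemma sqrt_diff_anti (u v e : ℝ) (hu : 0 ≤ u) (huv : u ≤ v) (he : 0 ≤ e) :
    Real.sqrt (v + e) - Real.sqrt v ≤ Real.sqrt (u + e) - Real.sqrt u := by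
  have hv : (0:ℝ) ≤ v := le_trans hu huv
  rw [sub_le_sub_iff]
  have h1 : Real.sqrt (v + e) * Real.sqrt u ≤ Real.sqrt (u + e) * Real.sqrt v := by
    rw [← Real.sqrt_mul (by linarith), ← Real.sqrt_mul (by linarith)]
    apply Real.sqrt_le_sqrt
    nlinarith
  nlinarith [Real.sq_sqrt (by linarith : (0:ℝ) ≤ v + e), Real.sq_sqrt (by linarith : (0:ℝ) ≤ u + e),
    Real.sq_sqrt hu, Real.sq_sqrt hv, Real.sqrt_nonneg (v+e), Real.sqrt_nonneg (u+e),
    Real.sqrt_nonneg u, Real.sqrt_nonneg v,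
    Real.sqrt_le_sqrt (by linarith : u ≤ v),
    Real.sqrt_le_sqrt (by linarith : u + e ≤ v + e)]

/-- Key polymatroid inequality over `range N`. -/
lemma polymatroid_range (N : ℕ) (a x : ℕ → ℝ) (A γ : ℝ) (hA : 0 ≤ A) (hAγ : A ≤ γ)
    (ha : ∀ i, 0 ≤ a i) (hx : ∀ i, x i = 0 ∨ x i = 1) :
    Real.sqrt A + ∑ k ∈ Finset.range N,
      (Real.sqrt (γ + ∑ j ∈ Finset.range (k+1), a j) -
       Real.sqrt (γ + ∑ j ∈ Finset.range k, a j)) * x k ≤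
    Real.sqrt (A + ∑ k ∈ Finset.range N, a k * x k) := by
  induction N with
  | zero => simp
  | succ N ih =>
    rw [Finset.sum_range_succ, Finset.sum_range_succ (f := fun k => a k * x k)]
    have hS : 0 ≤ ∑ k ∈ Finset.range N, a k * x k := by
      apply Finset.sum_nonneg
      intro i _
      rcases hx i with h | h <;> simp [h, ha i]
    have hSC : ∑ k ∈ Finset.range N, a k * x k ≤ ∑ j ∈ Finset.range N, a j := by
      apply Finset.sum_le_sum
      intro i _
      rcases hx i with h | h <;> simp [h, ha i]
    rcases hx N with h | h
    · simpa [h] using ih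
    · simp only [h, mul_one]
      have key := sqrt_diff_anti (A + ∑ k ∈ Finset.range N, a k * x k)
        (γ + ∑ j ∈ Finset.range N, a j) (a N) (by linarith) (by linarith) (ha N)
      have e1 : γ + ∑ j ∈ Finset.range N, a j + a N =
          γ + (∑ j ∈ Finset.range N, a j + a N) := by ring
      rw [e1] at key
      have e2 : A + ∑ k ∈ Finset.range N, a k * x k + a N =
          A + (∑ k ∈ Finset.range N, a k * x k + a N) := by ring
      rw [e2] at key
      rw [Finset.sum_range_succ]
      linarith [ih]

theorem nonlinear_polymatroid_inequality_HC
    (n m : ℕ) (σ : ℝ) (hσ : 0 ≤ σ) (c : Fin n → ℝ) (hc : ∀ i, 0 < c i)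
    (d : Fin m → ℝ) (hd : ∀ i, 0 < d i) (T : Finset (Fin m)) (τ : Equiv.Perm (Fin n))
    (x : Fin n → ℝ) (y : Fin m → ℝ) (z : ℝ)
    (hx : ∀ i, x i = 0 ∨ x i = 1) (hy : ∀ i, 0 ≤ y i ∧ y i ≤ 1) (hz : 0 ≤ z)
    (hcon : Real.sqrt (σ + ∑ i, c i * x i + ∑ i, d i * y i ^ 2) ≤ z) :
    (Real.sqrt (σ + ∑ i ∈ T, d i * y i ^ 2) +
        ∑ k, (Real.sqrt ((σ + ∑ i ∈ T, d i) + ∑ j ∈ Finset.Iic k, c (τ j)) -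
              Real.sqrt ((σ + ∑ i ∈ T, d i) + ∑ j ∈ Finset.Iio k, c (τ j))) * x (τ k)) ^ 2
      + ∑ i ∈ Tᶜ, d i * y i ^ 2 ≤ z ^ 2 := by
  classical
  set A : ℝ := σ + ∑ i ∈ T, d i * y i ^ 2 with hAdef
  set γ : ℝ := σ + ∑ i ∈ T, d i with hγdef
  have hA : 0 ≤ A := by
    apply add_nonneg hσ
    exact Finset.sum_nonneg fun i _ => mul_nonneg (hd i).le (sq_nonneg _)
  have hAγ : A ≤ γ := by
    apply add_le_add (le_refl _)
    apply Finset.sum_le_sum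
    intro i _
    nlinarith [(hy i).1, (hy i).2, (hd i).le, mul_nonneg (hd i).le
      (by nlinarith [(hy i).1, (hy i).2] : (0:ℝ) ≤ 1 - y i ^ 2)]
  set a : ℕ → ℝ := fun j => if h : j < n then c (τ ⟨j, h⟩) else 0 with hadef
  set x' : ℕ → ℝ := fun j => if h : j < n then x (τ ⟨j, h⟩) else 0 with hxdef
  have ha : ∀ i, 0 ≤ a i := by
    intro i
    simp only [hadef]
    split
    · exact (hc _).le
    · exact le_refl 0
  have hx' : ∀ i, x' i = 0 ∨ x' i = 1 := by
    intro i
    simp only [hxdef]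
    split
    · exact hx _
    · exact Or.inl rfl
  have haval : ∀ k : Fin n, a (k : ℕ) = c (τ k) := by
    intro k; simp [hadef, k.isLt]
  have hxval : ∀ k : Fin n, x' (k : ℕ) = x (τ k) := by
    intro k; simp [hxdef, k.isLt]
  -- Iic / Iio sums as range sums
  have hIic : ∀ k : Fin n, ∑ j ∈ Finset.Iic k, c (τ j) = ∑ j ∈ Finset.range ((k : ℕ)+1), a j := by
    intro k
    rw [show Finset.range ((k : ℕ)+1) = Finset.Iic (k : ℕ) by
      ext t; simp [Nat.lt_succ_iff]]
    rw [← Fin.map_valEmbedding_Iic, Finset.sum_map]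
    exact Finset.sum_congr rfl fun j _ => (haval j).symm
  have hIio : ∀ k : Fin n, ∑ j ∈ Finset.Iio k, c (τ j) = ∑ j ∈ Finset.range (k : ℕ), a j := by
    intro k
    rw [show Finset.range (k : ℕ) = Finset.Iio (k : ℕ) by ext t; simp]
    rw [← Fin.map_valEmbedding_Iio, Finset.sum_map]
    exact Finset.sum_congr rfl fun j _ => (haval j).symm
  -- convert the main Fin sum
  have hsum : ∑ k, (Real.sqrt (γ + ∑ j ∈ Finset.Iic k, c (τ j)) -
              Real.sqrt (γ + ∑ j ∈ Finset.Iio k, c (τ j))) * x (τ k)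
      = ∑ k ∈ Finset.range n,
        (Real.sqrt (γ + ∑ j ∈ Finset.range (k+1), a j) -
         Real.sqrt (γ + ∑ j ∈ Finset.range k, a j)) * x' k := by
    rw [← Fin.sum_univ_eq_sum_range]
    exact Finset.sum_congr rfl fun k _ => by rw [hIic k, hIio k, hxval k]
  have hcx : ∑ k ∈ Finset.range n, a k * x' k = ∑ i, c i * x i := by
    rw [← Fin.sum_univ_eq_sum_range (fun k => a k * x' k)]
    calc ∑ k : Fin n, a (k : ℕ) * x' (k : ℕ) = ∑ k : Fin n, c (τ k) * x (τ k) := by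
          exact Finset.sum_congr rfl fun k _ => by rw [haval k, hxval k]
      _ = ∑ i, c i * x i := Equiv.sum_comp τ (fun i => c i * x i)
  have main := polymatroid_range n a x' A γ hA hAγ ha hx'
  rw [hcx] at main
  rw [hsum]
  -- nonnegativity of the bracket
  have hnonneg : 0 ≤ Real.sqrt A + ∑ k ∈ Finset.range n,
      (Real.sqrt (γ + ∑ j ∈ Finset.range (k+1), a j) -
       Real.sqrt (γ + ∑ j ∈ Finset.range k, a j)) * x' k := by
    apply add_nonneg (Real.sqrt_nonneg _)
    apply Finset.sum_nonneg
    intro k _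
    apply mul_nonneg
    · rw [sub_nonneg]
      apply Real.sqrt_le_sqrt
      have : ∑ j ∈ Finset.range k, a j ≤ ∑ j ∈ Finset.range (k+1), a j := by
        apply Finset.sum_le_sum_of_subset_of_nonneg
        · exact Finset.range_subset_range.2 (Nat.le_succ k)
        · exact fun i _ _ => ha i
      linarith
    · rcases hx' k with h | h <;> simp [h]
  have hcxnn : 0 ≤ ∑ i, c i * x i := by
    apply Finset.sum_nonneg
    intro i _
    rcases hx i with h | h <;> simp [h, (hc i).le]
  have hsq : (Real.sqrt A + ∑ k ∈ Finset.range n,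
      (Real.sqrt (γ + ∑ j ∈ Finset.range (k+1), a j) -
       Real.sqrt (γ + ∑ j ∈ Finset.range k, a j)) * x' k) ^ 2 ≤ A + ∑ i, c i * x i := by
    have h2 := pow_le_pow_left₀ hnonneg main 2
    rwa [Real.sq_sqrt (by linarith)] at h2
  have hcompl : ∑ i ∈ T, d i * y i ^ 2 + ∑ i ∈ Tᶜ, d i * y i ^ 2 = ∑ i, d i * y i ^ 2 :=
    Finset.sum_add_sum_compl T _
  have hz2 : σ + ∑ i, c i * x i + ∑ i, d i * y i ^ 2 ≤ z ^ 2 := by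
    have hnn : 0 ≤ σ + ∑ i, c i * x i + ∑ i, d i * y i ^ 2 := by
      have : 0 ≤ ∑ i, d i * y i ^ 2 :=
        Finset.sum_nonneg fun i _ => mul_nonneg (hd i).le (sq_nonneg _)
      linarith
    have := pow_le_pow_left₀ (Real.sqrt_nonneg _) hcon 2
    rwa [Real.sq_sqrt hnn] at this
  linarith
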